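/- Let α > 1, γ > 0, θ > 0 and define G(β) = α − exp(−2γβ/θ) − (2γ/θ) α tan(β/2) on (0, π). Then G is strictly concave on (0,π), G(0⁺) = α − 1 > 0, G(β) → −∞ as β → π⁻, and G has a unique zero in (0, π). -/

import Mathlib

open Real Set

theorem stmt8 (α γ θ : ℝ) (hα : 1 < α) (hγ : 0 < γ) (hθ : 0 < θ)
    (G : ℝ → ℝ)
    (hG : ∀ β, G β = α - Real.exp (-(2 * γ * β) / θ) - (2 * γ / θ) * α * Real.tan (β / 2)) :
    StrictConcaveOn ℝ (Ioo 0 π) G ∧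
    Filter.Tendsto G (nhdsWithin 0 (Ioi 0)) (nhds (α - 1)) ∧
    0 < α - 1 ∧
    Filter.Tendsto G (nhdsWithin π (Iio π)) Filter.atBot ∧
    ∃! β, β ∈ Ioo 0 π ∧ G β = 0 := by
  have hGfun : G = fun β => α - Real.exp (-(2 * γ * β) / θ) - (2 * γ / θ) * α * Real.tan (β / 2) :=
    funext hG
  subst hGfun
  set g : ℝ → ℝ := fun β => 2 * γ / θ * Real.exp (-(2 * γ * β) / θ) - γ * α / θ / Real.cos (β / 2) ^ 2 with hg
  -- derivative of the exponential part
  have hexp : ∀ x : ℝ, HasDerivAt (fun β : ℝ => Real.exp (-(2 * γ * β) / θ))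
      (Real.exp (-(2 * γ * x) / θ) * (-(2 * γ) / θ)) x := by
    intro x
    have hl : HasDerivAt (fun β : ℝ => -(2 * γ * β) / θ) (-(2 * γ) / θ) x := by
      simpa using (((hasDerivAt_id x).const_mul (2 * γ)).neg.div_const θ)
    exact hl.exp
  have hcosne : ∀ x ∈ Ioo (0:ℝ) π, 0 < Real.cos (x / 2) := by
    intro x hx
    apply Real.cos_pos_of_mem_Ioo
    constructor <;> [linarith [hx.1, pi_pos]; linarith [hx.2]]
  -- first derivative
  have hderiv : ∀ x : ℝ, Real.cos (x / 2) ≠ 0 →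
      HasDerivAt (fun β => α - Real.exp (-(2 * γ * β) / θ) - (2 * γ / θ) * α * Real.tan (β / 2)) (g x) x := by
    intro x hc
    have htan : HasDerivAt (fun β : ℝ => Real.tan (β / 2)) (1 / Real.cos (x / 2) ^ 2 * (1 / 2)) x :=
      by have := (Real.hasDerivAt_tan hc).comp x ((hasDerivAt_id x).div_const 2); exact this
    have h := ((hasDerivAt_const x α).sub (hexp x)).sub ((htan.const_mul ((2 * γ / θ) * α)))
    refine h.congr_deriv ?_
    rw [hg]
    field_simp
    ring
  -- second derivative
  have hderiv2 : ∀ x : ℝ, Real.cos (x / 2) ≠ 0 →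
      HasDerivAt g
        (-(2 * γ / θ) ^ 2 * Real.exp (-(2 * γ * x) / θ)
          - γ * α / θ * Real.sin (x / 2) / Real.cos (x / 2) ^ 3) x := by
    intro x hc
    have hcos : HasDerivAt (fun β : ℝ => Real.cos (β / 2)) (-Real.sin (x / 2) * (1 / 2)) x :=
      by have := (Real.hasDerivAt_cos (x / 2)).comp x ((hasDerivAt_id x).div_const 2); exact this
    have hu : HasDerivAt (fun β : ℝ => Real.cos (β / 2) ^ 2)
        ((2 : ℕ) * Real.cos (x / 2) ^ 1 * (-Real.sin (x / 2) * (1 / 2))) x := hcos.pow 2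
    have hune : Real.cos (x / 2) ^ 2 ≠ 0 := pow_ne_zero _ hc
    have hdiv : HasDerivAt (fun β : ℝ => γ * α / θ / Real.cos (β / 2) ^ 2)
        ((0 * Real.cos (x / 2) ^ 2 - γ * α / θ * ((2 : ℕ) * Real.cos (x / 2) ^ 1 * (-Real.sin (x / 2) * (1 / 2))))
          / (Real.cos (x / 2) ^ 2) ^ 2) x :=
      (hasDerivAt_const x (γ * α / θ)).div hu hune
    have h := ((hexp x).const_mul (2 * γ / θ)).sub hdiv
    refine h.congr_deriv ?_
    field_simp
    ring
  -- continuity on Ioo 0 π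
  have hcont : ContinuousOn (fun β => α - Real.exp (-(2 * γ * β) / θ) - (2 * γ / θ) * α * Real.tan (β / 2)) (Ioo 0 π) :=
    fun x hx => (hderiv x (hcosne x hx).ne').continuousAt.continuousWithinAt
  -- strict concavity
  have hconc : StrictConcaveOn ℝ (Ioo 0 π)
      (fun β => α - Real.exp (-(2 * γ * β) / θ) - (2 * γ / θ) * α * Real.tan (β / 2)) := by
    apply strictConcaveOn_of_deriv2_neg (convex_Ioo 0 π) hcont
    intro x hx
    rw [interior_Ioo] at hx
    have hc := hcosne x hx
    have heq : Set.EqOn (deriv (fun β => α - Real.exp (-(2 * γ * β) / θ) - (2 * γ / θ) * α * Real.tan (β / 2))) g (Ioo 0 π) :=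
      fun y hy => (hderiv y (hcosne y hy).ne').deriv
    have hev : deriv (fun β => α - Real.exp (-(2 * γ * β) / θ) - (2 * γ / θ) * α * Real.tan (β / 2)) =ᶠ[nhds x] g :=
      Filter.eventuallyEq_of_mem ((isOpen_Ioo).mem_nhds hx) heq
    show deriv (deriv _) x < 0
    rw [hev.deriv_eq, (hderiv2 x hc.ne').deriv]
    have hsin : 0 < Real.sin (x / 2) := by
      apply Real.sin_pos_of_pos_of_lt_pi
      · linarith [hx.1]
      · linarith [hx.2, pi_pos]
    have he : 0 < Real.exp (-(2 * γ * x) / θ) := Real.exp_pos _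
    have h1 : 0 < (2 * γ / θ) ^ 2 * Real.exp (-(2 * γ * x) / θ) := by positivity
    have h2 : 0 < γ * α / θ * Real.sin (x / 2) / Real.cos (x / 2) ^ 3 := by
      have : (0:ℝ) < α := by linarith
      positivity
    linarith
  have hbotF : Filter.Tendsto (fun β => α - Real.exp (-(2 * γ * β) / θ) - (2 * γ / θ) * α * Real.tan (β / 2))
      (nhdsWithin π (Iio π)) Filter.atBot := by
    have hmap : Filter.Tendsto (fun β : ℝ => β / 2) (nhdsWithin π (Iio π)) (nhdsWithin (π / 2) (Iio (π / 2))) := by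
      rw [tendsto_nhdsWithin_iff]
      constructor
      · exact ((continuous_id.div_const 2).tendsto π).mono_left nhdsWithin_le_nhds
      · filter_upwards [self_mem_nhdsWithin] with x hx
        simp only [Set.mem_Iio] at hx ⊢
        linarith
    have htan : Filter.Tendsto (fun β : ℝ => Real.tan (β / 2)) (nhdsWithin π (Iio π)) Filter.atTop :=
      Real.tendsto_tan_pi_div_two.comp hmap
    have hk : (0:ℝ) < 2 * γ / θ * α := by
      have : (0:ℝ) < α := by linarith
      positivity
    have hB : Filter.Tendsto (fun β : ℝ => -(2 * γ / θ * α * Real.tan (β / 2)))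
        (nhdsWithin π (Iio π)) Filter.atBot :=
      Filter.tendsto_neg_atTop_atBot.comp (htan.const_mul_atTop hk)
    have hA : Filter.Tendsto (fun β : ℝ => α - Real.exp (-(2 * γ * β) / θ))
        (nhdsWithin π (Iio π)) (nhds (α - Real.exp (-(2 * γ * π) / θ))) := by
      apply Filter.Tendsto.mono_left _ nhdsWithin_le_nhds
      exact (Continuous.tendsto (by fun_prop) π)
    have := hA.add_atBot hB
    simpa [sub_eq_add_neg, Function.comp] using this
  refine ⟨hconc, ?_, by linarith, ?_, ?_⟩
  -- limit at 0
  · have h0 : ContinuousAt (fun β => α - Real.exp (-(2 * γ * β) / θ) - (2 * γ / θ) * α * Real.tan (β / 2)) 0 := by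
      have : Real.cos ((0:ℝ) / 2) ≠ 0 := by norm_num
      exact (hderiv 0 this).continuousAt
    have := h0.tendsto.mono_left (nhdsWithin_le_nhds (s := Ioi 0))
    simpa using this
  -- limit at π
  · exact hbotF
  -- unique zero
  · have h0 : Filter.Tendsto (fun β => α - Real.exp (-(2 * γ * β) / θ) - (2 * γ / θ) * α * Real.tan (β / 2))
        (nhdsWithin 0 (Ioi 0)) (nhds (α - 1)) := by
      have h0' : ContinuousAt (fun β => α - Real.exp (-(2 * γ * β) / θ) - (2 * γ / θ) * α * Real.tan (β / 2)) 0 := by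
        have : Real.cos ((0:ℝ) / 2) ≠ 0 := by norm_num
        exact (hderiv 0 this).continuousAt
      have := h0'.tendsto.mono_left (nhdsWithin_le_nhds (s := Ioi 0))
      simpa using this
    have hbot : Filter.Tendsto (fun β => α - Real.exp (-(2 * γ * β) / θ) - (2 * γ / θ) * α * Real.tan (β / 2))
        (nhdsWithin π (Iio π)) Filter.atBot := hbotF
    set F := fun β => α - Real.exp (-(2 * γ * β) / θ) - (2 * γ / θ) * α * Real.tan (β / 2) with hF
    -- near 0, F is positive
    have hpos : ∀ c : ℝ, 0 < c → ∃ t, 0 < t ∧ t < c ∧ 0 < F t := by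
      intro c hc
      have h1 : ∀ᶠ x in nhdsWithin 0 (Ioi 0), 0 < F x :=
        h0.eventually (eventually_gt_nhds (by linarith))
      have h2 : ∀ᶠ x in nhdsWithin (0:ℝ) (Ioi 0), x < c :=
        Filter.Eventually.filter_mono nhdsWithin_le_nhds (eventually_lt_nhds hc)
      have h3 : ∀ᶠ x in nhdsWithin (0:ℝ) (Ioi 0), 0 < x := self_mem_nhdsWithin
      obtain ⟨t, ht1, ht2, ht3⟩ := (h1.and (h2.and h3)).exists
      exact ⟨t, ht3, ht2, ht1⟩
    -- near π, F is negative
    have hneg : ∀ c : ℝ, c < π → ∃ s, c < s ∧ s < π ∧ F s < 0 := by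
      intro c hc
      have h1 : ∀ᶠ x in nhdsWithin π (Iio π), F x < 0 :=
        hbot.eventually (Filter.eventually_lt_atBot 0)
      have h2 : ∀ᶠ x in nhdsWithin π (Iio π), c < x :=
        Filter.Eventually.filter_mono nhdsWithin_le_nhds (eventually_gt_nhds hc)
      have h3 : ∀ᶠ x in nhdsWithin π (Iio π), x < π := self_mem_nhdsWithin
      obtain ⟨s, hs1, hs2, hs3⟩ := (h1.and (h2.and h3)).exists
      exact ⟨s, hs2, hs3, hs1⟩
    -- no two zeros
    have key : ∀ z1 z2, z1 ∈ Ioo 0 π → z2 ∈ Ioo 0 π → z1 < z2 → F z1 = 0 → F z2 = 0 → False := by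
      intro z1 z2 hz1 hz2 hlt he1 he2
      obtain ⟨t, ht0, htl, htp⟩ := hpos z1 hz1.1
      have htz2 : t ≠ z2 := by intro h; rw [h] at htl; linarith
      have htmem : t ∈ Ioo 0 π := ⟨ht0, by linarith [hz1.2]⟩
      set a := (z2 - z1) / (z2 - t) with ha
      set b := (z1 - t) / (z2 - t) with hb
      have hden : 0 < z2 - t := by linarith
      have ha0 : 0 < a := div_pos (by linarith) hden
      have hb0 : 0 < b := div_pos (by linarith) hden
      have hab : a + b = 1 := by
        rw [ha, hb, ← add_div, div_eq_one_iff_eq hden.ne']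
        ring
      have hcomb : a • t + b • z2 = z1 := by
        simp only [smul_eq_mul, ha, hb]
        field_simp
        ring
      have := hconc.2 htmem hz2 htz2 ha0 hb0 hab
      rw [hcomb] at this
      simp only [smul_eq_mul] at this
      rw [he1, he2] at this
      nlinarith [mul_pos ha0 htp]
    -- existence via IVT
    obtain ⟨t, ht0, htl, htp⟩ := hpos (π / 2) (by positivity)
    obtain ⟨s, hs1, hs2, hsn⟩ := hneg (π / 2) (by linarith [pi_pos])
    have hts : t < s := by linarith
    have hsub : Icc t s ⊆ Ioo 0 π := fun x hx => ⟨lt_of_lt_of_le ht0 hx.1, lt_of_le_of_lt hx.2 hs2⟩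
    have hivt := intermediate_value_Icc' hts.le (hcont.mono hsub)
    have h0mem : (0:ℝ) ∈ Icc (F s) (F t) := ⟨hsn.le, htp.le⟩
    obtain ⟨β, hβmem, hβeq⟩ := hivt h0mem
    have hβIoo : β ∈ Ioo 0 π := hsub hβmem
    refine ⟨β, ⟨hβIoo, hβeq⟩, ?_⟩
    rintro y ⟨hymem, hyeq⟩
    rcases lt_trichotomy y β with h | h | h
    · exact absurd (key y β hymem hβIoo h hyeq hβeq) not_false
    · exact h
    · exact absurd (key β y hβIoo hymem h hβeq hyeq) not_false
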